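/- Let α, σ, γ > 0, c, d ∈ ℝ, and g_γ(z) = g(z) + (γ/2)z² with g as above. Then prox_{σ g_γ}(v) = (v − σc)/(1+σγ) if v > ((1+σγ)/α)(c−d) + σc, and prox_{σ g_γ}(v) = (v − σd)/(1 + σ(α+γ)) otherwise. -/
import Mathlib

/-- Proximal mapping of the Moreau--Yosida regularized conjugate `g_γ = g + (γ/2)(·)²`. -/
theorem stmt_15 (α σ γ c d : ℝ) (hα : 0 < α) (hσ : 0 < σ) (hγ : 0 < γ)
    (g : ℝ → ℝ)
    (hg : ∀ z : ℝ, g z =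
      if (c - d) / α < z then c * z - (1 / (2 * α)) * (c - d) ^ 2
      else (α / 2) * z ^ 2 + z * d)
    (v : ℝ) :
    IsMinOn (fun w : ℝ => (1 / 2) * (w - v) ^ 2 + σ * (g w + γ / 2 * w ^ 2)) Set.univ
      (if ((1 + σ * γ) / α) * (c - d) + σ * c < v
       then (v - σ * c) / (1 + σ * γ)
       else (v - σ * d) / (1 + σ * (α + γ))) := by
  have hA : (0:ℝ) < 1 + σ * γ := by nlinarith
  have hB : (0:ℝ) < 1 + σ * (α + γ) := by nlinarith
  set t := (c - d) / α with ht
  have hta : α * t = c - d := by rw [ht]; field_simp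
  have hlin : ∀ z : ℝ, c * z - (1 / (2 * α)) * (c - d) ^ 2
      = α / 2 * z ^ 2 + z * d - α / 2 * (z - t) ^ 2 := by
    intro z
    rw [ht]
    field_simp
    ring
  have hrw : (1 + σ * γ) / α * (c - d) = (1 + σ * γ) * t := by rw [ht]; ring
  rw [isMinOn_iff]
  intro w _
  split_ifs with hv
  · -- case 1: minimizer p on linear branch
    rw [hrw] at hv
    set p := (v - σ * c) / (1 + σ * γ) with hp
    have hpe : (1 + σ * γ) * p = v - σ * c := by rw [hp]; field_simp
    have hcp : t < p := by nlinarith [hpe, hA, hv]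
    have hve : v = (1 + σ * γ) * p + σ * c := by linarith
    have hc : c = α * t + d := by linarith
    rw [hg p, hg w, if_pos hcp, hve]
    by_cases hw : t < w
    · rw [if_pos hw]
      linarith [mul_nonneg hA.le (sq_nonneg (w - p))]
    · rw [if_neg hw, hlin p, hc]
      linarith [mul_nonneg hA.le (sq_nonneg (w - p)),
        mul_nonneg (mul_nonneg hσ.le hα.le) (sq_nonneg (w - t))]
  · -- case 2: minimizer q on quadratic branch
    push_neg at hv
    rw [hrw] at hv
    set q := (v - σ * d) / (1 + σ * (α + γ)) with hq
    have hqe : (1 + σ * (α + γ)) * q = v - σ * d := by rw [hq]; field_simp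
    have hcq : q ≤ t := by nlinarith [hqe, hB, hv, hta]
    have hve : v = (1 + σ * (α + γ)) * q + σ * d := by linarith
    rw [hg q, hg w, if_neg (not_lt.mpr hcq), hve]
    by_cases hw : t < w
    · rw [if_pos hw, hlin w]
      linarith [mul_nonneg hA.le (sq_nonneg (w - t)),
        mul_nonneg hB.le (mul_nonneg (sub_nonneg.mpr hcq) (sub_nonneg.mpr hw.le)),
        mul_nonneg hB.le (sq_nonneg (t - q))]
    · rw [if_neg hw]
      linarith [mul_nonneg hB.le (sq_nonneg (w - q))]
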